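/- Let n ≥ 3 and Δ a 2-local derivation on M_n(A) vanishing on the span of the matrix units. Then the restriction Δ_{i,i} of Δ to the corner e_{i,i}M_n(A)e_{i,i} is additive for each i. -/

import Mathlib

open Matrix

def IsDerivation {A : Type*} [Ring A] [Algebra ℂ A] (D : A → A) : Prop :=
  (∀ x y, D (x + y) = D x + D y) ∧ (∀ (c : ℂ) (x), D (c • x) = c • D x) ∧
  (∀ x y, D (x * y) = D x * y + x * D y)

def Is2LocalDerivation {A : Type*} [Ring A] [Algebra ℂ A] (Δ : A → A) : Prop :=
  ∀ x y, ∃ D, IsDerivation D ∧ Δ x = D x ∧ Δ y = D y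

def HasInnerDerivationProperty (A : Type*) [Ring A] [Algebra ℂ A] : Prop :=
  ∀ D : A → A, IsDerivation D → ∃ a : A, ∀ x, D x = a * x - x * a

/-- `Δ` vanishes on the linear span of the matrix units. -/
def VanishesOnUnits {A : Type*} [Ring A] [Algebra ℂ A] {n : ℕ}
    (Δ : Matrix (Fin n) (Fin n) A → Matrix (Fin n) (Fin n) A) : Prop :=
  ∀ x ∈ Submodule.span ℂ (Set.range fun p : Fin n × Fin n =>
      Matrix.single p.1 p.2 (1 : A)), Δ x = 0
section Aux

variable {B : Type*} [Ring B] [Algebra ℂ B]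

lemma der_zero' {D : B → B} (hD : IsDerivation D) : D 0 = 0 := by
  have h : D 0 = D 0 + D 0 := by simpa using (hD.1 0 0).symm
  exact left_eq_add.mp h

lemma der_sum {D : B → B} (hD : IsDerivation D) {ι : Type*} (s : Finset ι) (f : ι → B) :
    D (∑ x ∈ s, f x) = ∑ x ∈ s, D (f x) := by
  classical
  induction s using Finset.induction_on with
  | empty => simpa using der_zero' hD
  | insert _ _ h ih => rw [Finset.sum_insert h, Finset.sum_insert h, hD.1, ih]

end Aux

section Mat

variable {A : Type*} [Ring A] [Algebra ℂ A] {n : ℕ}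

/-- sandwiching a matrix between matrix units extracts an entry -/
lemma corner_lemma (p q z w : Fin n) (M : Matrix (Fin n) (Fin n) A) :
    single p z (1 : A) * M * single w q 1
      = single p q (M z w) := by
  ext s t
  by_cases ht : t = q
  · subst ht
    rw [mul_single_apply_same, mul_one]
    by_cases hs : s = p
    · subst hs
      rw [single_mul_apply_same, one_mul, single_apply_same]
    · rw [single_mul_apply_of_ne (h := hs),
        single_apply_of_ne (h := by tauto)]
  · rw [mul_single_apply_of_ne (hbj := ht),
      single_apply_of_ne (h := by tauto)]

lemma sum_units_eq_one :
    (∑ k : Fin n, single k k (1 : A)) = 1 := by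
  ext s t
  rw [Matrix.sum_apply]
  by_cases h : s = t
  · subst h
    rw [Finset.sum_eq_single s (fun k _ hk => by simp [hk])
      (by simp), single_apply_same, Matrix.one_apply_eq]
  · rw [Finset.sum_eq_zero (fun k _ => by
      by_cases hks : k = s
      · subst hks; simp [h]
      · simp [hks]),
      Matrix.one_apply_ne h]

lemma inner_Mn (hidp : HasInnerDerivationProperty A) (hn : 0 < n)
    (D : Matrix (Fin n) (Fin n) A → Matrix (Fin n) (Fin n) A) (hD : IsDerivation D) :
    ∃ B, ∀ x, D x = B * x - x * B := by
  classical
  set z : Fin n := ⟨0, hn⟩ with hz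
  set b : Matrix (Fin n) (Fin n) A :=
    ∑ k, D (single k z 1) * single z k 1 with hb
  set D' : Matrix (Fin n) (Fin n) A → Matrix (Fin n) (Fin n) A :=
    fun x => D x - (b * x - x * b) with hD'def
  have hD' : IsDerivation D' := by
    refine ⟨fun x y => ?_, fun c x => ?_, fun x y => ?_⟩
    · simp only [hD'def, hD.1]
      noncomm_ring
    · simp only [hD'def, hD.2.1, mul_smul_comm, smul_mul_assoc, smul_sub]
    · simp only [hD'def, hD.2.2]
      noncomm_ring
  -- D' vanishes on matrix units
  have hunit : ∀ p q : Fin n, D' (single p q (1:A)) = 0 := by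
    intro p q
    have h1 : b * single p q 1 = D (single p z 1) * single z q 1 := by
      rw [hb, Finset.sum_mul, Finset.sum_eq_single p
        (fun k _ hk => by rw [mul_assoc, single_mul_single_of_ne (h := hk), mul_zero]) (by simp)]
      rw [mul_assoc, single_mul_single_same, one_mul]
    have h2 : ∀ k : Fin n,
        single p q (1:A) * (D (single k z 1) * single z k 1)
        = (if k = q then D (single p z 1) else 0) * single z k 1
          - D (single p q 1) * (single k z 1 * single z k 1) := by
      intro k
      have key : D (single p q (1:A) * single k z 1)
          = (if k = q then D (single p z 1) else 0) := by
        by_cases hk : k = q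
        · subst hk; rw [single_mul_single_same, one_mul, if_pos rfl]
        · rw [single_mul_single_of_ne (h := Ne.symm hk), der_zero' hD, if_neg hk]
      have hl := hD.2.2 (single p q 1) (single k z 1)
      rw [key] at hl
      have hml : single p q (1:A) * D (single k z 1)
          = (if k = q then D (single p z 1) else 0)
            - D (single p q 1) * single k z 1 := by
        rw [hl]; abel
      rw [← mul_assoc, hml, sub_mul, mul_assoc]
    have h3 : single p q (1:A) * b
        = D (single p z 1) * single z q 1 - D (single p q 1) := by
      rw [hb, Finset.mul_sum]
      calc ∑ k, single p q (1:A) * (D (single k z 1) * single z k 1)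
          = ∑ k, ((if k = q then D (single p z 1) else 0) * single z k 1
              - D (single p q 1) * (single k z 1 * single z k 1)) :=
            Finset.sum_congr rfl fun k _ => h2 k
        _ = (∑ k, (if k = q then D (single p z 1) else 0) * single z k 1)
              - D (single p q 1) * ∑ k, single k z (1:A) * single z k 1 := by
            rw [Finset.sum_sub_distrib, Finset.mul_sum]
        _ = D (single p z 1) * single z q 1 - D (single p q 1) := by
            congr 1
            · rw [Finset.sum_eq_single q (fun k _ hk => by rw [if_neg hk, zero_mul]) (by simp)]
              rw [if_pos rfl]
            · simp only [single_mul_single_same, one_mul]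
              rw [sum_units_eq_one, mul_one]
    simp only [hD'def]
    rw [h1, h3]
    abel
  -- sandwich property
  have sandwich : ∀ (u v M : Matrix (Fin n) (Fin n) A), D' u = 0 → D' v = 0 →
      D' (u * M * v) = u * D' M * v := by
    intro u v M hu hv
    rw [hD'.2.2, hD'.2.2, hu, hv]
    simp [mul_assoc]
  -- the induced derivation on A
  set δ : A → A := fun a => D' (single z z a) z z with hδdef
  have hEzz : ∀ a : A, D' (single z z a) = single z z (δ a) := by
    intro a
    have h0 : single z z a
        = single z z (1:A) * single z z a * single z z 1 := by
      rw [single_mul_single_same, one_mul, single_mul_single_same, mul_one]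
    conv_lhs => rw [h0]
    rw [sandwich _ _ _ (hunit z z) (hunit z z), corner_lemma]
  have hEpq : ∀ (p q : Fin n) (a : A),
      D' (single p q a) = single p q (δ a) := by
    intro p q a
    have h0 : single p q a
        = single p z (1:A) * single z z a * single z q 1 := by
      rw [single_mul_single_same, one_mul, single_mul_single_same, mul_one]
    rw [h0, sandwich _ _ _ (hunit p z) (hunit z q), hEzz,
      single_mul_single_same, one_mul, single_mul_single_same, mul_one]
  have hδ : IsDerivation δ := by
    refine ⟨fun a a' => ?_, fun c a => ?_, fun a a' => ?_⟩
    · simp only [hδdef]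
      rw [single_add, hD'.1, Matrix.add_apply]
    · simp only [hδdef]
      rw [← smul_single, hD'.2.1, Matrix.smul_apply]
    · have h0 : single z z (a * a')
          = single z z a * single z z a' := by
        rw [single_mul_single_same]
      have := hD'.2.2 (single z z a) (single z z a')
      rw [← h0, hEzz, hEzz, hEzz, single_mul_single_same, single_mul_single_same,
        ← single_add] at this
      have h2 := congrArg (fun M => M z z) this
      simpa using h2
  obtain ⟨u, hu⟩ := hidp δ hδ
  set U : Matrix (Fin n) (Fin n) A := Matrix.of fun s t => if s = t then u else 0 with hU
  have hUx : ∀ x : Matrix (Fin n) (Fin n) A, D' x = U * x - x * U := by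
    intro x
    have h1 : D' x = ∑ p : Fin n, ∑ q : Fin n, single p q (δ (x p q)) := by
      conv_lhs => rw [matrix_eq_sum_single x]
      rw [der_sum hD']
      exact Finset.sum_congr rfl fun p _ => by
        rw [der_sum hD']
        exact Finset.sum_congr rfl fun q _ => hEpq p q (x p q)
    rw [h1]
    ext s t
    rw [Matrix.sum_apply, Matrix.sub_apply]
    have h2 : ∀ p : Fin n, (∑ q : Fin n, single p q (δ (x p q))) s t
        = if p = s then δ (x s t) else 0 := by
      intro p
      rw [Matrix.sum_apply]
      by_cases hp : p = s
      · subst hp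
        rw [Finset.sum_eq_single t (fun q _ hq => by simp [hq])
          (by simp), single_apply_same, if_pos rfl]
      · rw [Finset.sum_eq_zero (fun q _ => by simp [hp]),
          if_neg hp]
    rw [Finset.sum_congr rfl fun p _ => h2 p,
      Finset.sum_ite_eq' Finset.univ s (fun _ => δ (x s t))]
    have h3 : (U * x) s t = u * x s t := by
      rw [Matrix.mul_apply]
      rw [Finset.sum_eq_single s (fun r _ hr => by
        simp only [hU, Matrix.of_apply, if_neg (Ne.symm hr), zero_mul]) (by simp)]
      simp [hU]
    have h4 : (x * U) s t = x s t * u := by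
      rw [Matrix.mul_apply]
      rw [Finset.sum_eq_single t (fun r _ hr => by
        simp only [hU, Matrix.of_apply, if_neg hr, mul_zero]) (by simp)]
      simp [hU]
    rw [h3, h4]
    simp [hu]
  refine ⟨b + U, fun x => ?_⟩
  have : D x = D' x + (b * x - x * b) := by simp [hD'def]
  rw [this, hUx]
  noncomm_ring

end Mat

section Main

variable {A : Type*} [Ring A] [Algebra ℂ A] {n : ℕ}

lemma comm_unit_entry (B : Matrix (Fin n) (Fin n) A) (p q : Fin n) (a : A) (s t : Fin n) :
    (B * single p q a - single p q a * B) s t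
      = (if t = q then B s p * a else 0) - (if s = p then a * B q t else 0) := by
  rw [Matrix.sub_apply]
  congr 1
  · by_cases ht : t = q
    · subst ht; rw [mul_single_apply_same, if_pos rfl]
    · rw [mul_single_apply_of_ne (hbj := ht), if_neg ht]
  · by_cases hs : s = p
    · subst hs; rw [single_mul_apply_same, if_pos rfl]
    · rw [single_mul_apply_of_ne (h := hs), if_neg hs]

lemma hmat_entry (r w : Fin n) :
    (∑ k : Fin n, (((k : ℕ) : ℂ)) • single k k (1:A)) r w
      = if r = w then ((w:ℕ):ℂ) • (1:A) else 0 := by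
  rw [Matrix.sum_apply]
  by_cases hrw : r = w
  · subst hrw
    rw [Finset.sum_eq_single r (fun k _ hk => by simp [hk]) (by simp), if_pos rfl]
    simp
  · rw [Finset.sum_eq_zero (fun k _ => by
      by_cases hkr : k = r
      · subst hkr; simp [hrw]
      · simp [hkr]), if_neg hrw]

lemma diag_of_comm_h (B : Matrix (Fin n) (Fin n) A)
    (hc : B * (∑ k : Fin n, (((k : ℕ) : ℂ)) • single k k (1:A))
        = (∑ k : Fin n, (((k : ℕ) : ℂ)) • single k k (1:A)) * B)
    {s t : Fin n} (hst : s ≠ t) : B s t = 0 := by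
  have h1 : (B * (∑ k : Fin n, (((k : ℕ) : ℂ)) • single k k (1:A))) s t
      = ((t:ℕ):ℂ) • B s t := by
    rw [Matrix.mul_apply, Finset.sum_eq_single t
      (fun r _ hr => by rw [hmat_entry, if_neg hr, mul_zero]) (by simp)]
    rw [hmat_entry, if_pos rfl, mul_smul_comm, mul_one]
  have h2 : ((∑ k : Fin n, (((k : ℕ) : ℂ)) • single k k (1:A)) * B) s t
      = ((s:ℕ):ℂ) • B s t := by
    rw [Matrix.mul_apply, Finset.sum_eq_single s
      (fun r _ hr => by rw [hmat_entry, if_neg (Ne.symm hr), zero_mul]) (by simp)]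
    rw [hmat_entry, if_pos rfl, smul_mul_assoc, one_mul]
  have h3 := congrArg (fun M => M s t) hc
  beta_reduce at h3
  rw [h1, h2] at h3
  have h4 : (((t:ℕ):ℂ) - ((s:ℕ):ℂ)) • B s t = 0 := by rw [sub_smul, h3, sub_self]
  have h5 : (((t:ℕ):ℂ) - ((s:ℕ):ℂ)) ≠ 0 := by
    have hv : (t:ℕ) ≠ (s:ℕ) := fun hc' => hst (Fin.ext hc'.symm)
    exact sub_ne_zero.mpr (by exact_mod_cast hv)
  have h6 := congrArg (fun a => (((t:ℕ):ℂ) - ((s:ℕ):ℂ))⁻¹ • a) h4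
  simpa [smul_smul, inv_mul_cancel₀ h5] using h6

end Main


theorem stmt9 {A : Type*} [NormedRing A] [NormedAlgebra ℂ A] [CompleteSpace A]
    (hidp : HasInnerDerivationProperty A) {n : ℕ} (hn : 3 ≤ n)
    (Δ : Matrix (Fin n) (Fin n) A → Matrix (Fin n) (Fin n) A)
    (hΔ : Is2LocalDerivation Δ) (hvan : VanishesOnUnits Δ) :
    ∀ (i : Fin n) (x y : Matrix (Fin n) (Fin n) A),
      x = Matrix.single i i (1 : A) * x * Matrix.single i i (1 : A) →
      y = Matrix.single i i (1 : A) * y * Matrix.single i i (1 : A) →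
      Δ (x + y) = Δ x + Δ y := by
  intro i x y hx hy
  classical
  have hmemE : ∀ p q : Fin n, single p q (1:A) ∈ Submodule.span ℂ
      (Set.range fun p : Fin n × Fin n => Matrix.single p.1 p.2 (1 : A)) :=
    fun p q => Submodule.subset_span ⟨(p,q), rfl⟩
  have hΔh : Δ (∑ k : Fin n, (((k : ℕ) : ℂ)) • single k k (1:A)) = 0 :=
    hvan _ (Submodule.sum_mem _ fun k _ => Submodule.smul_mem _ _ (hmemE k k))
  have hΔE : ∀ p q : Fin n, Δ (single p q (1:A)) = 0 := fun p q => hvan _ (hmemE p q)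
  have hloc : ∀ u v, ∃ B, Δ u = B * u - u * B ∧ Δ v = B * v - v * B := by
    intro u v
    obtain ⟨D, hD, hu, hv⟩ := hΔ u v
    obtain ⟨B, hB⟩ := inner_Mn hidp (by omega) D hD
    exact ⟨B, hu.trans (hB u), hv.trans (hB v)⟩
  -- corner preservation
  have P1 : ∀ (p : Fin n) (a : A),
      Δ (single p p a) = single p p ((Δ (single p p a)) p p) := by
    intro p a
    obtain ⟨B, hB1, hB2⟩ := hloc (single p p a)
      (∑ k : Fin n, (((k : ℕ) : ℂ)) • single k k (1:A))
    have hcomm : B * (∑ k : Fin n, (((k : ℕ) : ℂ)) • single k k (1:A))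
        = (∑ k : Fin n, (((k : ℕ) : ℂ)) • single k k (1:A)) * B := by
      have h0 : B * (∑ k : Fin n, (((k : ℕ) : ℂ)) • single k k (1:A))
          - (∑ k : Fin n, (((k : ℕ) : ℂ)) • single k k (1:A)) * B = 0 := by
        rw [← hB2, hΔh]
      exact sub_eq_zero.mp h0
    have hdiag : ∀ s t : Fin n, s ≠ t → B s t = 0 := fun s t hst => diag_of_comm_h B hcomm hst
    have gval : (B * single p p a - single p p a * B) p p
        = B p p * a - a * B p p := by
      rw [comm_unit_entry, if_pos rfl, if_pos rfl]
    rw [hB1, gval]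
    ext s t
    rw [comm_unit_entry]
    by_cases hs : s = p <;> by_cases ht : t = p
    · simp [hs, ht]
    · simp [hs, ht, Ne.symm ht, hdiag p t fun h => ht h.symm]
    · simp [hs, ht, Ne.symm hs, hdiag s p hs]
    · simp [hs, ht, Ne.symm hs, Ne.symm ht]
  -- translation between corners
  have expand2 : ∀ (B m1 m2 : Matrix (Fin n) (Fin n) A),
      B * (m1 + m2) - (m1 + m2) * B = (B*m1 - m1*B) + (B*m2 - m2*B) := by
    intro B m1 m2; noncomm_ring
  have expand3 : ∀ (B m1 m2 m3 : Matrix (Fin n) (Fin n) A),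
      B * (m1 + m2 + m3) - (m1 + m2 + m3) * B
        = (B*m1 - m1*B) + (B*m2 - m2*B) + (B*m3 - m3*B) := by
    intro B m1 m2 m3; noncomm_ring
  have transl : ∀ (p q : Fin n) (a : A), p ≠ q →
      (Δ (single p p a)) p p = (Δ (single q q a)) q q := by
    intro p q a hpq
    obtain ⟨B1, hB1w, hB1e⟩ := hloc (single p p a + single q q a)
      (single p q 1)
    have hB1c : B1 p p = B1 q q := by
      have h0 : B1 * single p q 1 - single p q 1 * B1 = 0 := by
        rw [← hB1e, hΔE]
      have h1 := congrArg (fun M => M p q) h0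
      simp only [comm_unit_entry, if_pos rfl, Matrix.zero_apply] at h1
      simpa using sub_eq_zero.mp h1
    have hwpp : (Δ (single p p a + single q q a)) p p
        = B1 p p * a - a * B1 p p := by
      have h1 := congrArg (fun M => M p p) hB1w
      rw [expand2] at h1
      simp only [Matrix.add_apply, comm_unit_entry] at h1
      simpa [hpq] using h1
    have hwqq : (Δ (single p p a + single q q a)) q q
        = B1 q q * a - a * B1 q q := by
      have h1 := congrArg (fun M => M q q) hB1w
      rw [expand2] at h1
      simp only [Matrix.add_apply, comm_unit_entry] at h1
      simpa [Ne.symm hpq] using h1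
    obtain ⟨B2, hB2w, hB2e⟩ := hloc (single p p a + single q q a)
      (single p p a)
    have e2 : (Δ (single p p a + single q q a)) p p
        = (Δ (single p p a)) p p := by
      have h1 := congrArg (fun M => M p p) hB2w
      have h2 := congrArg (fun M => M p p) hB2e
      rw [expand2] at h1
      simp only [Matrix.add_apply, comm_unit_entry] at h1 h2
      simp [hpq, Ne.symm hpq] at h1 h2
      rw [h1, h2]
    obtain ⟨B3, hB3w, hB3e⟩ := hloc (single p p a + single q q a)
      (single q q a)
    have e3 : (Δ (single p p a + single q q a)) q q
        = (Δ (single q q a)) q q := by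
      have h1 := congrArg (fun M => M q q) hB3w
      have h2 := congrArg (fun M => M q q) hB3e
      rw [expand2] at h1
      simp only [Matrix.add_apply, comm_unit_entry] at h1 h2
      simp [hpq, Ne.symm hpq] at h1 h2
      rw [h1, h2]
    rw [← e2, ← e3, hwpp, hwqq, hB1c]
  -- coordinates
  have hxE : x = single i i (x i i) := hx.trans (corner_lemma i i i i x)
  have hyE : y = single i i (y i i) := hy.trans (corner_lemma i i i i y)
  have hxy : x + y = single i i (x i i + y i i) := by
    rw [single_add, ← hxE, ← hyE]
  -- choose j k distinct from i
  have h0n : 0 < n := by omega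
  have h1n : 1 < n := by omega
  have h2n : 2 < n := by omega
  obtain ⟨j, k, hji, hki, hkj⟩ : ∃ j k : Fin n, j ≠ i ∧ k ≠ i ∧ k ≠ j := by
    by_cases h0 : i = ⟨0, h0n⟩
    · exact ⟨⟨1, h1n⟩, ⟨2, h2n⟩, by simp [h0, Fin.ext_iff], by simp [h0, Fin.ext_iff],
        by simp [Fin.ext_iff]⟩
    · by_cases h1 : i = ⟨1, h1n⟩
      · exact ⟨⟨0, h0n⟩, ⟨2, h2n⟩, by simp [h1, Fin.ext_iff], by simp [h1, Fin.ext_iff],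
          by simp [Fin.ext_iff]⟩
      · exact ⟨⟨0, h0n⟩, ⟨1, h1n⟩, Ne.symm h0, Ne.symm h1, by simp [Fin.ext_iff]⟩
  -- the auxiliary element v and the 3-cycle t
  have hΔtt : Δ (single i j (1:A) + single j k 1 + single k i 1) = 0 :=
    hvan _ (Submodule.add_mem _ (Submodule.add_mem _ (hmemE i j) (hmemE j k)) (hmemE k i))
  obtain ⟨B, hBv, hBt⟩ := hloc
    (single i i (x i i) + single j j (y i i) + single k k (x i i + y i i))
    (single i j (1:A) + single j k 1 + single k i 1)
  have hBt0 : B * (single i j (1:A) + single j k 1 + single k i 1)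
      - (single i j (1:A) + single j k 1 + single k i 1) * B = 0 := by
    rw [← hBt, hΔtt]
  have hBij : B i i = B j j := by
    have h1 := congrArg (fun M => M i j) hBt0
    rw [expand3] at h1
    simp only [Matrix.add_apply, comm_unit_entry, Matrix.zero_apply] at h1
    simp only [if_pos rfl, if_neg (Ne.symm hkj), if_neg (Ne.symm hji), if_neg hji,
      if_neg (Ne.symm hki)] at h1
    simpa [sub_eq_zero] using h1
  have hBjk : B j j = B k k := by
    have h1 := congrArg (fun M => M j k) hBt0
    rw [expand3] at h1
    simp only [Matrix.add_apply, comm_unit_entry, Matrix.zero_apply] at h1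
    simp only [if_pos rfl, if_neg hkj, if_neg hji, if_neg hki, if_neg (Ne.symm hkj)] at h1
    simpa [sub_eq_zero] using h1
  have hvii : (Δ (single i i (x i i) + single j j (y i i)
        + single k k (x i i + y i i))) i i = B i i * (x i i) - (x i i) * B i i := by
    have h1 := congrArg (fun M => M i i) hBv
    rw [expand3] at h1
    simp only [Matrix.add_apply, comm_unit_entry] at h1
    simpa [Ne.symm hji, Ne.symm hki] using h1
  have hvjj : (Δ (single i i (x i i) + single j j (y i i)
        + single k k (x i i + y i i))) j j = B j j * (y i i) - (y i i) * B j j := by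
    have h1 := congrArg (fun M => M j j) hBv
    rw [expand3] at h1
    simp only [Matrix.add_apply, comm_unit_entry] at h1
    simpa [hji, Ne.symm hkj] using h1
  have hvkk : (Δ (single i i (x i i) + single j j (y i i)
        + single k k (x i i + y i i))) k k
        = B k k * (x i i + y i i) - (x i i + y i i) * B k k := by
    have h1 := congrArg (fun M => M k k) hBv
    rw [expand3] at h1
    simp only [Matrix.add_apply, comm_unit_entry] at h1
    simpa [hki, hkj] using h1
  have hkey : (Δ (single i i (x i i) + single j j (y i i)
        + single k k (x i i + y i i))) k k
      = (Δ (single i i (x i i) + single j j (y i i)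
        + single k k (x i i + y i i))) i i
      + (Δ (single i i (x i i) + single j j (y i i)
        + single k k (x i i + y i i))) j j := by
    rw [hvii, hvjj, hvkk, hBij, hBjk]
    noncomm_ring
  -- extraction of the three corners of Δ v
  have extract : ∀ (p : Fin n) (e : A),
      (p = i ∧ e = x i i) ∨ (p = j ∧ e = y i i) ∨ (p = k ∧ e = x i i + y i i) →
      (Δ (single i i (x i i) + single j j (y i i)
        + single k k (x i i + y i i))) p p = (Δ (single p p e)) p p := by
    intro p e hp
    obtain ⟨B2, hB2v, hB2e⟩ := hloc
      (single i i (x i i) + single j j (y i i)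
        + single k k (x i i + y i i)) (single p p e)
    have h1 := congrArg (fun M => M p p) hB2v
    have h2 := congrArg (fun M => M p p) hB2e
    rw [expand3] at h1
    simp only [Matrix.add_apply, comm_unit_entry] at h1 h2
    rcases hp with ⟨rfl, rfl⟩ | ⟨rfl, rfl⟩ | ⟨rfl, rfl⟩
    · simp [hji, hki, Ne.symm hji, Ne.symm hki] at h1 h2
      rw [h1, h2]
    · simp [hji, hkj, Ne.symm hji, Ne.symm hkj] at h1 h2
      rw [h1, h2]
    · simp [hki, hkj, Ne.symm hki, Ne.symm hkj] at h1 h2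
      rw [h1, h2]
  have chain : (Δ (single i i (x i i + y i i))) i i
      = (Δ (single i i (x i i))) i i + (Δ (single i i (y i i))) i i := by
    rw [transl i k (x i i + y i i) (Ne.symm hki),
      ← extract k (x i i + y i i) (Or.inr (Or.inr ⟨rfl, rfl⟩)), hkey,
      extract i (x i i) (Or.inl ⟨rfl, rfl⟩),
      extract j (y i i) (Or.inr (Or.inl ⟨rfl, rfl⟩)),
      transl j i (y i i) hji]
  calc Δ (x + y) = Δ (single i i (x i i + y i i)) := by rw [← hxy]
    _ = single i i ((Δ (single i i (x i i + y i i))) i i) := P1 i _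
    _ = single i i ((Δ (single i i (x i i))) i i
          + (Δ (single i i (y i i))) i i) := by rw [chain]
    _ = single i i ((Δ (single i i (x i i))) i i)
          + single i i ((Δ (single i i (y i i))) i i) := single_add _ _ _ _
    _ = Δ x + Δ y := by rw [← P1 i (x i i), ← P1 i (y i i), ← hxE, ← hyE]
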